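/- Let B : ℝ^S⃗ → ℝ^Ω⃗ and Γ : ℝ^S → ℝ^S⃗ be linear with ker B ∩ im Γ = {0}, and let B| denote the restriction of B to the subspace im Γ. Let Δ be a perturbation with ‖Δ‖ ≤ ρ where ρ ≤ ‖B|‖ and ρ ≤ −‖B|‖ + √(‖B|‖² + (1/2)‖(B|ᵀB|)^{-1}‖^{-1}). Let G ∈ im Γ and define G̃ = ((B|+Δ|)ᵀ(B|+Δ|))^{-1}(B|+Δ|)ᵀ (B G), where Δ| is Δ restricted to im Γ. Then (B|+Δ|)ᵀ(B|+Δ|) is invertible and ‖G̃ − G‖ ≤ ρ · ‖G‖ · Q(‖(B|ᵀB|)^{-1}‖, ‖B|‖) where Q(X,Y) = XY(12XY² + 1). -/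

import Mathlib

set_option maxHeartbeats 2000000

open ContinuousLinearMap in
theorem aux18 {E F : Type*} [NormedAddCommGroup E] [InnerProductSpace ℝ E]
    [NormedAddCommGroup F] [InnerProductSpace ℝ F] [CompleteSpace E] [CompleteSpace F]
    (Bres Δres : E →L[ℝ] F) (N : E →L[ℝ] E)
    (hN1 : N.comp ((adjoint Bres).comp Bres) = ContinuousLinearMap.id ℝ E)
    (hN2 : ((adjoint Bres).comp Bres).comp N = ContinuousLinearMap.id ℝ E)
    (ρ : ℝ) (hΔres_norm : ‖Δres‖ ≤ ρ) (hρ0 : 0 ≤ ρ) (hρ1 : ρ ≤ ‖Bres‖)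
    (hρ2 : ρ ≤ -‖Bres‖ + Real.sqrt (‖Bres‖ ^ 2 + (1 / 2) * ‖N‖⁻¹))
    (G : E) :
    ∃ M : E →L[ℝ] E,
      M.comp ((adjoint (Bres + Δres)).comp (Bres + Δres)) = ContinuousLinearMap.id ℝ E ∧
      ((adjoint (Bres + Δres)).comp (Bres + Δres)).comp M = ContinuousLinearMap.id ℝ E ∧
      ‖M ((adjoint (Bres + Δres)) (Bres G)) - G‖ ≤
        ρ * ‖G‖ * (‖N‖ * ‖Bres‖ * (12 * ‖N‖ * ‖Bres‖ ^ 2 + 1)) := by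
  rcases subsingleton_or_nontrivial E with hss | hnt
  · refine ⟨N, Subsingleton.elim _ _, Subsingleton.elim _ _, ?_⟩
    rw [Subsingleton.elim (N ((adjoint (Bres + Δres)) (Bres G)) - G) 0,
      Subsingleton.elim G 0]
    simp
  · have hB0 : 0 ≤ ‖Bres‖ := norm_nonneg _
    have hN0 : 0 ≤ ‖N‖ := norm_nonneg _
    
    obtain ⟨A, hA⟩ : ∃ A : E →L[ℝ] E, A = (adjoint Bres).comp Bres := ⟨_, rfl⟩
    obtain ⟨T, hT⟩ : ∃ T : E →L[ℝ] F, T = Bres + Δres := ⟨_, rfl⟩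
    obtain ⟨A', hA'⟩ : ∃ A' : E →L[ℝ] E, A' = (adjoint T).comp T := ⟨_, rfl⟩
    obtain ⟨Ee, hE⟩ : ∃ Ee : E →L[ℝ] E, Ee = A' - A := ⟨_, rfl⟩
    rw [← hA] at hN1 hN2
    rw [← hT, ← hA']
    have hadj : ∀ X : E →L[ℝ] F, ‖adjoint X‖ = ‖X‖ := fun X =>
      LinearIsometryEquiv.norm_map (ContinuousLinearMap.adjoint) X
    have hEeq : Ee = (adjoint Bres).comp Δres + (adjoint Δres).comp Bres
        + (adjoint Δres).comp Δres := by
      rw [hE, hA', hA, hT, map_add]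
      simp only [add_comp, comp_add]
      abel
    have hEnorm : ‖Ee‖ ≤ 2 * ρ * ‖Bres‖ + ρ ^ 2 := by
      rw [hEeq]
      have h1 : ‖(adjoint Bres).comp Δres‖ ≤ ‖Bres‖ * ρ := by
        calc ‖(adjoint Bres).comp Δres‖ ≤ ‖adjoint Bres‖ * ‖Δres‖ := opNorm_comp_le _ _
          _ ≤ ‖Bres‖ * ρ := by rw [hadj]; exact mul_le_mul_of_nonneg_left hΔres_norm hB0
      have h2 : ‖(adjoint Δres).comp Bres‖ ≤ ρ * ‖Bres‖ := by
        calc ‖(adjoint Δres).comp Bres‖ ≤ ‖adjoint Δres‖ * ‖Bres‖ := opNorm_comp_le _ _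
          _ ≤ ρ * ‖Bres‖ := by
              rw [hadj]; exact mul_le_mul_of_nonneg_right hΔres_norm hB0
      have h3 : ‖(adjoint Δres).comp Δres‖ ≤ ρ * ρ := by
        calc ‖(adjoint Δres).comp Δres‖ ≤ ‖adjoint Δres‖ * ‖Δres‖ := opNorm_comp_le _ _
          _ ≤ ρ * ρ := by rw [hadj]; exact mul_le_mul hΔres_norm hΔres_norm (norm_nonneg _) hρ0
      calc ‖(adjoint Bres).comp Δres + (adjoint Δres).comp Bres + (adjoint Δres).comp Δres‖
          ≤ ‖(adjoint Bres).comp Δres + (adjoint Δres).comp Bres‖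
            + ‖(adjoint Δres).comp Δres‖ := norm_add_le _ _
        _ ≤ (‖(adjoint Bres).comp Δres‖ + ‖(adjoint Δres).comp Bres‖)
            + ‖(adjoint Δres).comp Δres‖ := by
            gcongr; exact norm_add_le _ _
        _ ≤ (‖Bres‖ * ρ + ρ * ‖Bres‖) + ρ * ρ := by gcongr
        _ = 2 * ρ * ‖Bres‖ + ρ ^ 2 := by ring
    have hsq : 2 * ρ * ‖Bres‖ + ρ ^ 2 ≤ (1 / 2) * ‖N‖⁻¹ := by
      have h1 : ρ + ‖Bres‖ ≤ Real.sqrt (‖Bres‖ ^ 2 + (1 / 2) * ‖N‖⁻¹) := by linarith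
      have h2 : (ρ + ‖Bres‖) ^ 2 ≤ ‖Bres‖ ^ 2 + (1 / 2) * ‖N‖⁻¹ := by
        have := Real.sq_sqrt (by positivity : (0:ℝ) ≤ ‖Bres‖ ^ 2 + (1 / 2) * ‖N‖⁻¹)
        nlinarith [h1, Real.sqrt_nonneg (‖Bres‖ ^ 2 + (1 / 2) * ‖N‖⁻¹)]
      nlinarith
    have hNE : ‖N * Ee‖ ≤ 1 / 2 := by
      calc ‖N * Ee‖ ≤ ‖N‖ * ‖Ee‖ := norm_mul_le _ _
        _ ≤ ‖N‖ * ((1 / 2) * ‖N‖⁻¹) :=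
            mul_le_mul_of_nonneg_left (le_trans hEnorm hsq) hN0
        _ = (1 / 2) * (‖N‖ * ‖N‖⁻¹) := by ring
        _ ≤ (1 / 2) * 1 := by
            apply mul_le_mul_of_nonneg_left _ (by norm_num)
            rcases eq_or_ne ‖N‖ 0 with h | h
            · simp [h]
            · rw [mul_inv_cancel₀ h]
        _ = 1 / 2 := mul_one _
    have huA_mul : A * N = 1 := hN2
    have huA_inv : N * A = 1 := hN1
    let uA : (E →L[ℝ] E)ˣ := ⟨A, N, huA_mul, huA_inv⟩
    have hlt : ‖-(N * Ee)‖ < 1 := by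
      rw [norm_neg]; linarith
    let u : (E →L[ℝ] E)ˣ := Units.oneSub (-(N * Ee)) hlt
    have hu_val : (u : E →L[ℝ] E) = 1 + N * Ee := by
      show (1 : E →L[ℝ] E) - (-(N * Ee)) = 1 + N * Ee
      noncomm_ring
    have hA'_eq : A' = ((uA * u : (E →L[ℝ] E)ˣ) : E →L[ℝ] E) := by
      rw [Units.val_mul, hu_val]
      show A' = A * (1 + N * Ee)
      calc A' = A + Ee := by rw [hE]; noncomm_ring
        _ = A * 1 + (A * N) * Ee := by rw [huA_mul]; noncomm_ring
        _ = A * (1 + N * Ee) := by noncomm_ring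
    refine ⟨((uA * u)⁻¹ : (E →L[ℝ] E)ˣ), ?_, ?_, ?_⟩
    · show (((uA * u)⁻¹ : (E →L[ℝ] E)ˣ) : E →L[ℝ] E) * A' = 1
      rw [hA'_eq]; exact Units.inv_mul _
    · show A' * (((uA * u)⁻¹ : (E →L[ℝ] E)ˣ) : E →L[ℝ] E) = 1
      rw [hA'_eq]; exact Units.mul_inv _
    · obtain ⟨M, hM⟩ : ∃ M : E →L[ℝ] E, M = (((uA * u)⁻¹ : (E →L[ℝ] E)ˣ) : E →L[ℝ] E) := ⟨_, rfl⟩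
      rw [← hM]
      have hu_inv_bound : ‖((u⁻¹ : (E →L[ℝ] E)ˣ) : E →L[ℝ] E)‖ ≤ 2 := by
        have h1 : ((u⁻¹ : (E →L[ℝ] E)ˣ) : E →L[ℝ] E) * (u : E →L[ℝ] E) = 1 := Units.inv_mul _
        rw [hu_val] at h1
        have h2 : ((u⁻¹ : (E →L[ℝ] E)ˣ) : E →L[ℝ] E) = 1 - ((u⁻¹ : (E →L[ℝ] E)ˣ) : E →L[ℝ] E) * (N * Ee) := by
          rw [eq_sub_iff_add_eq]
          calc ((u⁻¹ : (E →L[ℝ] E)ˣ) : E →L[ℝ] E) + ((u⁻¹ : (E →L[ℝ] E)ˣ) : E →L[ℝ] E) * (N * Ee)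
              = ((u⁻¹ : (E →L[ℝ] E)ˣ) : E →L[ℝ] E) * (1 + N * Ee) := by noncomm_ring
            _ = 1 := h1
        have h4 : ‖((u⁻¹ : (E →L[ℝ] E)ˣ) : E →L[ℝ] E)‖ ≤ 1 + ‖((u⁻¹ : (E →L[ℝ] E)ˣ) : E →L[ℝ] E)‖ * (1 / 2) := by
          calc ‖((u⁻¹ : (E →L[ℝ] E)ˣ) : E →L[ℝ] E)‖ = ‖(1 : E →L[ℝ] E) - ((u⁻¹ : (E →L[ℝ] E)ˣ) : E →L[ℝ] E) * (N * Ee)‖ := by rw [← h2]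
            _ ≤ ‖(1 : E →L[ℝ] E)‖ + ‖((u⁻¹ : (E →L[ℝ] E)ˣ) : E →L[ℝ] E) * (N * Ee)‖ := norm_sub_le _ _
            _ ≤ 1 + ‖((u⁻¹ : (E →L[ℝ] E)ˣ) : E →L[ℝ] E)‖ * (1 / 2) := by
                refine add_le_add (le_of_eq norm_one) ?_
                calc ‖((u⁻¹ : (E →L[ℝ] E)ˣ) : E →L[ℝ] E) * (N * Ee)‖ ≤ ‖((u⁻¹ : (E →L[ℝ] E)ˣ) : E →L[ℝ] E)‖ * ‖N * Ee‖ :=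
                    norm_mul_le _ _
                  _ ≤ ‖((u⁻¹ : (E →L[ℝ] E)ˣ) : E →L[ℝ] E)‖ * (1 / 2) :=
                    mul_le_mul_of_nonneg_left hNE (norm_nonneg _)
        linarith
      have hM_bound : ‖M‖ ≤ 2 * ‖N‖ := by
        have hMe : M = ((u⁻¹ : (E →L[ℝ] E)ˣ) : E →L[ℝ] E) * ((uA⁻¹ : (E →L[ℝ] E)ˣ) : E →L[ℝ] E) := by
          rw [hM, mul_inv_rev, Units.val_mul]
        have huAinv : ((uA⁻¹ : (E →L[ℝ] E)ˣ) : E →L[ℝ] E) = N := rfl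
        rw [hMe, huAinv]
        calc ‖((u⁻¹ : (E →L[ℝ] E)ˣ) : E →L[ℝ] E) * N‖ ≤ ‖((u⁻¹ : (E →L[ℝ] E)ˣ) : E →L[ℝ] E)‖ * ‖N‖ := norm_mul_le _ _
          _ ≤ 2 * ‖N‖ := mul_le_mul_of_nonneg_right hu_inv_bound hN0
      have hBG : Bres G = T G - Δres G := by
        rw [hT]; simp
      have hvec : M ((adjoint T) (Bres G)) - G = -(M ((adjoint T) (Δres G))) := by
        rw [hBG, map_sub, map_sub]
        have h5 : (adjoint T) (T G) = A' G := by rw [hA']; rfl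
        rw [h5]
        have h6 : M (A' G) = G := by
          have h7 : (M * A') G = (1 : E →L[ℝ] E) G := by
            rw [hM, hA'_eq, Units.inv_mul]
          simpa using h7
        rw [h6]
        abel
      rw [hvec, norm_neg]
      have hTnorm : ‖adjoint T‖ ≤ 2 * ‖Bres‖ := by
        rw [hadj, hT]
        calc ‖Bres + Δres‖ ≤ ‖Bres‖ + ‖Δres‖ := norm_add_le _ _
          _ ≤ ‖Bres‖ + ‖Bres‖ := by linarith
          _ = 2 * ‖Bres‖ := by ring
      have key : ‖M ((adjoint T) (Δres G))‖ ≤ (2 * ‖N‖) * (2 * ‖Bres‖) * ρ * ‖G‖ := by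
        calc ‖M ((adjoint T) (Δres G))‖ ≤ ‖M‖ * ‖(adjoint T) (Δres G)‖ := le_opNorm _ _
          _ ≤ ‖M‖ * (‖adjoint T‖ * ‖Δres G‖) := by
              gcongr; exact le_opNorm _ _
          _ ≤ ‖M‖ * (‖adjoint T‖ * (‖Δres‖ * ‖G‖)) := by
              gcongr; exact le_opNorm _ _
          _ ≤ (2 * ‖N‖) * ((2 * ‖Bres‖) * (ρ * ‖G‖)) := by
              have hg : (0:ℝ) ≤ ‖G‖ := norm_nonneg G
              have hx1 : ‖Δres‖ * ‖G‖ ≤ ρ * ‖G‖ := mul_le_mul_of_nonneg_right hΔres_norm hg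
              have hx2 : ‖adjoint T‖ * (‖Δres‖ * ‖G‖) ≤ (2 * ‖Bres‖) * (ρ * ‖G‖) :=
                mul_le_mul hTnorm hx1 (by positivity) (by positivity)
              exact mul_le_mul hM_bound hx2 (by positivity) (by positivity)
          _ = (2 * ‖N‖) * (2 * ‖Bres‖) * ρ * ‖G‖ := by ring
      have hone : (1 : ℝ) ≤ ‖N‖ * ‖Bres‖ ^ 2 := by
        have h2 : (1 : ℝ) ≤ ‖N‖ * ‖A‖ := by
          calc (1 : ℝ) = ‖(1 : E →L[ℝ] E)‖ := norm_one.symm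
            _ = ‖N * A‖ := by rw [huA_inv]
            _ ≤ ‖N‖ * ‖A‖ := norm_mul_le _ _
        have h3 : ‖A‖ ≤ ‖Bres‖ ^ 2 := by
          rw [hA]
          calc ‖(adjoint Bres).comp Bres‖ ≤ ‖adjoint Bres‖ * ‖Bres‖ := opNorm_comp_le _ _
            _ = ‖Bres‖ ^ 2 := by rw [hadj]; ring
        nlinarith
      calc ‖M ((adjoint T) (Δres G))‖ ≤ (2 * ‖N‖) * (2 * ‖Bres‖) * ρ * ‖G‖ := key
        _ ≤ ρ * ‖G‖ * (‖N‖ * ‖Bres‖ * (12 * ‖N‖ * ‖Bres‖ ^ 2 + 1)) := by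
            nlinarith [hone, mul_nonneg (mul_nonneg (mul_nonneg hρ0 (norm_nonneg G)) hN0) hB0,
              norm_nonneg G, mul_nonneg hρ0 (norm_nonneg G), mul_nonneg hN0 hB0]

set_option maxHeartbeats 1000000 in
open ContinuousLinearMap in
theorem stmt_18 {S Sseq Ωseq : Type*} [Fintype S] [Fintype Sseq] [Fintype Ωseq]
    (B Δ : EuclideanSpace ℝ Sseq →L[ℝ] EuclideanSpace ℝ Ωseq)
    (Γ : EuclideanSpace ℝ S →L[ℝ] EuclideanSpace ℝ Sseq)
    (hker : LinearMap.ker (B : EuclideanSpace ℝ Sseq →ₗ[ℝ] EuclideanSpace ℝ Ωseq) ⊓ LinearMap.range (Γ : EuclideanSpace ℝ S →ₗ[ℝ] EuclideanSpace ℝ Sseq) = ⊥)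
    (Bres Δres : (LinearMap.range (Γ : EuclideanSpace ℝ S →ₗ[ℝ] EuclideanSpace ℝ Sseq) : Submodule ℝ (EuclideanSpace ℝ Sseq)) →L[ℝ]
      EuclideanSpace ℝ Ωseq)
    (hBres : Bres = B.comp (LinearMap.range (Γ : EuclideanSpace ℝ S →ₗ[ℝ] EuclideanSpace ℝ Sseq)).subtypeL)
    (hΔres : Δres = Δ.comp (LinearMap.range (Γ : EuclideanSpace ℝ S →ₗ[ℝ] EuclideanSpace ℝ Sseq)).subtypeL)
    (N : (LinearMap.range (Γ : EuclideanSpace ℝ S →ₗ[ℝ] EuclideanSpace ℝ Sseq) : Submodule ℝ (EuclideanSpace ℝ Sseq)) →L[ℝ]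
      (LinearMap.range (Γ : EuclideanSpace ℝ S →ₗ[ℝ] EuclideanSpace ℝ Sseq) : Submodule ℝ (EuclideanSpace ℝ Sseq)))
    (hN1 : N.comp ((adjoint Bres).comp Bres) = ContinuousLinearMap.id ℝ _)
    (hN2 : ((adjoint Bres).comp Bres).comp N = ContinuousLinearMap.id ℝ _)
    (ρ : ℝ) (hΔ : ‖Δ‖ ≤ ρ) (hρ1 : ρ ≤ ‖Bres‖)
    (hρ2 : ρ ≤ -‖Bres‖ + Real.sqrt (‖Bres‖ ^ 2 + (1 / 2) * ‖N‖⁻¹))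
    (G : (LinearMap.range (Γ : EuclideanSpace ℝ S →ₗ[ℝ] EuclideanSpace ℝ Sseq) : Submodule ℝ (EuclideanSpace ℝ Sseq))) :
    ∃ M : (LinearMap.range (Γ : EuclideanSpace ℝ S →ₗ[ℝ] EuclideanSpace ℝ Sseq) : Submodule ℝ (EuclideanSpace ℝ Sseq)) →L[ℝ]
        (LinearMap.range (Γ : EuclideanSpace ℝ S →ₗ[ℝ] EuclideanSpace ℝ Sseq) : Submodule ℝ (EuclideanSpace ℝ Sseq)),
      M.comp ((adjoint (Bres + Δres)).comp (Bres + Δres)) = ContinuousLinearMap.id ℝ _ ∧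
      ((adjoint (Bres + Δres)).comp (Bres + Δres)).comp M = ContinuousLinearMap.id ℝ _ ∧
      ‖M ((adjoint (Bres + Δres)) (B (G : EuclideanSpace ℝ Sseq))) - G‖ ≤
        ρ * ‖G‖ * (‖N‖ * ‖Bres‖ * (12 * ‖N‖ * ‖Bres‖ ^ 2 + 1)) := by
  have hρ0 : 0 ≤ ρ := le_trans (ContinuousLinearMap.opNorm_nonneg Δ) hΔ
  have hBG : B (G : EuclideanSpace ℝ Sseq) = Bres G := by rw [hBres]; rfl
  rw [hBG]
  have hΔres_norm : ‖Δres‖ ≤ ρ := by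
    rw [hΔres]
    refine le_trans (ContinuousLinearMap.opNorm_comp_le _ _) ?_
    calc ‖Δ‖ * ‖(LinearMap.range (Γ : EuclideanSpace ℝ S →ₗ[ℝ] EuclideanSpace ℝ Sseq)).subtypeL‖ ≤ ρ * 1 :=
        mul_le_mul hΔ (Submodule.norm_subtypeL_le _) (ContinuousLinearMap.opNorm_nonneg _) hρ0
      _ = ρ := mul_one ρ
  exact aux18 Bres Δres N hN1 hN2 ρ hΔres_norm hρ0 hρ1 hρ2 G
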